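/- Let d ≥ 1, let φ : ℝ^d → ℝ be twice continuously differentiable with φ(x) > 0 for all x, let V : ℝ^d → ℝ, and let E₀ ∈ ℝ. Suppose φ satisfies the stationary Schrödinger equation E₀·φ(x) = −(1/2)Δφ(x) + V(x)·φ(x) for all x ∈ ℝ^d. Then for every x ∈ ℝ^d, V(x) + (1/8)·(−2Δ(log(φ²))(x) − |∇(log(φ²))(x)|²) = E₀; in particular the first variation of the total energy functional is constant in x at the eigen-state density ρ₀ = φ². -/

import Mathlib

open scoped BigOperators

/-- The Euclidean Laplacian `Δ f = ∑ⱼ ∂²f/∂xⱼ²` on `ℝ^d`. -/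
noncomputable def laplacian {d : ℕ} (f : EuclideanSpace ℝ (Fin d) → ℝ)
    (x : EuclideanSpace ℝ (Fin d)) : ℝ :=
  ∑ i, fderiv ℝ (fun y => fderiv ℝ f y (EuclideanSpace.single i 1)) x (EuclideanSpace.single i 1)

-- norm squared via coordinates
lemma euc_norm_sq {d : ℕ} (v : EuclideanSpace ℝ (Fin d)) :
    ‖v‖ ^ 2 = ∑ i, (v i) ^ 2 := by
  rw [EuclideanSpace.norm_eq, Real.sq_sqrt (by positivity)]
  simp [sq_abs]

lemma gradient_apply {d : ℕ} (f : EuclideanSpace ℝ (Fin d) → ℝ) (x : EuclideanSpace ℝ (Fin d))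
    (i : Fin d) : gradient f x i = fderiv ℝ f x (EuclideanSpace.single i 1) := by
  have h : (inner ℝ (gradient f x) (EuclideanSpace.single i (1:ℝ)) : ℝ)
      = fderiv ℝ f x (EuclideanSpace.single i 1) := by
    rw [gradient]
    exact InnerProductSpace.toDual_symm_apply
  rw [EuclideanSpace.inner_single_right] at h
  simpa using h

/-- At an energy eigen-state `φ > 0` of the stationary Schrödinger equation
`E₀ φ = −(1/2)Δφ + V φ`, the first variation of the total energy functional
`V + (1/8)(−2Δ log(φ²) − |∇ log(φ²)|²)` is constant, equal to `E₀`, in `x`. -/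
theorem energy_first_variation_constant_at_eigenstate (d : ℕ) (hd : 1 ≤ d)
    (φ : EuclideanSpace ℝ (Fin d) → ℝ) (hφ : ContDiff ℝ 2 φ)
    (hpos : ∀ x, 0 < φ x)
    (V : EuclideanSpace ℝ (Fin d) → ℝ) (E₀ : ℝ)
    (heigen : ∀ x, E₀ * φ x = -(1 / 2) * laplacian φ x + V x * φ x) :
    ∀ x,
      V x + (1 / 8) *
          (-2 * laplacian (fun y => Real.log (φ y ^ 2)) x
            - ‖gradient (fun y => Real.log (φ y ^ 2)) x‖ ^ 2)
        = E₀ := by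
  intro x
  set e : Fin d → EuclideanSpace ℝ (Fin d) := fun i => EuclideanSpace.single i 1 with he
  have hdiff : Differentiable ℝ φ := hφ.differentiable two_ne_zero
  have hC1 : ContDiff ℝ 1 (fderiv ℝ φ) := hφ.fderiv_right (by norm_num)
  set f : EuclideanSpace ℝ (Fin d) → ℝ := fun y => Real.log (φ y ^ 2) with hfdef
  -- first derivative of f
  have hf' : ∀ y, HasFDerivAt f ((2 * (φ y)⁻¹) • fderiv ℝ φ y) y := by
    intro y
    have h1 : HasFDerivAt (fun z => φ z ^ 2)
        (φ y • fderiv ℝ φ y + φ y • fderiv ℝ φ y) y := by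
      have := (hdiff y).hasFDerivAt.mul (hdiff y).hasFDerivAt
      simp only [pow_two]; exact this
    have h2 := h1.log (pow_ne_zero 2 (hpos y).ne')
    refine h2.congr_fderiv ?_
    ext v
    have hy := (hpos y).ne'
    simp [smul_smul]
    field_simp
    ring
  have hf'app : ∀ y, fderiv ℝ f y = (2 * (φ y)⁻¹) • fderiv ℝ φ y := fun y => (hf' y).fderiv
  -- second derivatives
  set B := fderiv ℝ (fderiv ℝ φ) x with hB
  have hBx : HasFDerivAt (fderiv ℝ φ) B x := (hC1.differentiable one_ne_zero x).hasFDerivAt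
  have happ : ∀ i, HasFDerivAt (fun y => fderiv ℝ φ y (e i))
      ((ContinuousLinearMap.apply ℝ ℝ (e i)).comp B) x := fun i =>
    (ContinuousLinearMap.apply ℝ ℝ (e i)).hasFDerivAt.comp x hBx
  have hlapφ : laplacian φ x = ∑ i, B (e i) (e i) := by
    unfold laplacian
    refine Finset.sum_congr rfl fun i _ => ?_
    rw [(happ i).fderiv]; rfl
  have hc : HasFDerivAt (fun y => 2 * (φ y)⁻¹)
      ((2 : ℝ) • ((ContinuousLinearMap.smulRight (1 : ℝ →L[ℝ] ℝ) (-(φ x ^ 2)⁻¹)).comp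
        (fderiv ℝ φ x))) x :=
    ((hasFDerivAt_inv (hpos x).ne').comp x (hdiff x).hasFDerivAt).const_mul 2
  have hlapf : laplacian f x
      = ∑ i, ((2 * (φ x)⁻¹) * B (e i) (e i)
          + fderiv ℝ φ x (e i) * (2 * (-(φ x ^ 2)⁻¹ * fderiv ℝ φ x (e i)))) := by
    unfold laplacian
    refine Finset.sum_congr rfl fun i _ => ?_
    have heq : (fun y => fderiv ℝ f y (e i))
        = fun y => (2 * (φ y)⁻¹) * fderiv ℝ φ y (e i) := by
      funext y; rw [hf'app y]; rfl
    have hprod : HasFDerivAt (fun y => 2 * (φ y)⁻¹ * fderiv ℝ φ y (e i)) _ x := hc.mul (happ i)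
    rw [heq, hprod.fderiv]
    simp only [ContinuousLinearMap.add_apply, ContinuousLinearMap.smul_apply,
      ContinuousLinearMap.comp_apply, ContinuousLinearMap.apply_apply,
      ContinuousLinearMap.smulRight_apply, ContinuousLinearMap.one_apply,
      smul_eq_mul]
    ring
  -- gradient norm
  have hgrad : ‖gradient f x‖ ^ 2 = ∑ i, ((2 * (φ x)⁻¹) * fderiv ℝ φ x (e i)) ^ 2 := by
    rw [euc_norm_sq]
    refine Finset.sum_congr rfl fun i _ => ?_
    rw [gradient_apply, hf'app x]
    rfl
  -- put it together
  have hE := heigen x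
  have hφx := (hpos x).ne'
  have hlap : laplacian φ x = 2 * (V x - E₀) * φ x := by
    have : -(1/2 : ℝ) * laplacian φ x = E₀ * φ x - V x * φ x := by linarith
    field_simp at this ⊢
    linarith
  rw [hlapf, hgrad, hlapφ] at *
  set S := ∑ i, fderiv ℝ φ x (e i) ^ 2 with hS
  have h1 : ∑ i, ((2 * (φ x)⁻¹) * B (e i) (e i)
      + fderiv ℝ φ x (e i) * (2 * (-(φ x ^ 2)⁻¹ * fderiv ℝ φ x (e i))))
      = (2 * (φ x)⁻¹) * (∑ i, B (e i) (e i)) - 2 * (φ x ^ 2)⁻¹ * S := by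
    rw [hS]
    simp only [Finset.mul_sum]
    rw [← Finset.sum_sub_distrib]
    refine Finset.sum_congr rfl fun i _ => ?_
    ring
  have h2 : ∑ i, ((2 * (φ x)⁻¹) * fderiv ℝ φ x (e i)) ^ 2 = 4 * (φ x ^ 2)⁻¹ * S := by
    rw [hS, Finset.mul_sum]
    refine Finset.sum_congr rfl fun i _ => ?_
    have := hφx
    field_simp
    ring
  rw [h1, h2, hlap]
  field_simp
  ring
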